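/- arXiv:2009.09273 — 6 statements merged into one kernel-verified Lean document; each statement's English description precedes it below -/
import Mathlib

section
/- In a traceless Markov tower (M_n, E_n, e_n) of modulus d > 0, for every n ≥ 1 an element x ∈ M_n commutes with e_n if and only if x ∈ M_{n-1}; in particular M_{n-1} = M_n ∩ {e_n}', and if x ∈ M_n satisfies x e_n = e_n x then x = E_n(x). -/
/-- A traceless Markov tower `(Mₙ, Eₙ, eₙ)` of modulus `d > 0`: an increasing sequence of
finite-dimensional unital star subalgebras of an ambient complex star-ordered algebra `B`,
together with faithful conditional expectations `Eₙ : Mₙ → M_{n-1}` and Jones projections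
`eₙ ∈ M_{n+1}` (for `n ≥ 1`) satisfying the Temperley–Lieb–Jones relations, the relation
`eₙ x eₙ = Eₙ(x) eₙ`, the Markov condition `E_{n+1}(eₙ) = d⁻² · 1`, and the pull-down
condition `M_{n+1} eₙ = Mₙ eₙ`. -/
structure MarkovTower (B : Type*) [Ring B] [StarRing B] [Algebra ℂ B] [StarModule ℂ B]
    [PartialOrder B] [StarOrderedRing B] where
  /-- the tower of algebras -/
  M : ℕ → StarSubalgebra ℂ B
  M_le : ∀ n, M n ≤ M (n + 1)
  finDim : ∀ n, FiniteDimensional ℂ (M n)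
  /-- the modulus -/
  d : ℝ
  d_pos : 0 < d
  /-- the conditional expectations; `E n` restricts to `M n → M (n-1)` for `n ≥ 1` -/
  E : ℕ → B →ₗ[ℂ] B
  /-- the Jones projections; `e n ∈ M (n+1)` for `n ≥ 1` -/
  e : ℕ → B
  E_mem : ∀ n, 1 ≤ n → ∀ x ∈ M n, E n x ∈ M (n - 1)
  E_fix : ∀ n, 1 ≤ n → ∀ a ∈ M (n - 1), E n a = a
  E_bimod : ∀ n, 1 ≤ n → ∀ a ∈ M (n - 1), ∀ b ∈ M (n - 1), ∀ x ∈ M n,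
    E n (a * x * b) = a * E n x * b
  E_pos : ∀ n, 1 ≤ n → ∀ x ∈ M n, 0 ≤ E n (star x * x)
  E_faithful : ∀ n, 1 ≤ n → ∀ x ∈ M n, E n (star x * x) = 0 → x = 0
  e_mem : ∀ n, 1 ≤ n → e n ∈ M (n + 1)
  e_idem : ∀ n, 1 ≤ n → e n * e n = e n
  e_star : ∀ n, 1 ≤ n → star (e n) = e n
  e_comm : ∀ m n, 1 ≤ m → 1 ≤ n → m + 1 < n → e m * e n = e n * e m
  e_tlj_up : ∀ n, 1 ≤ n → e n * e (n + 1) * e n = ((d : ℂ) ^ 2)⁻¹ • e n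
  e_tlj_down : ∀ n, 1 ≤ n → e (n + 1) * e n * e (n + 1) = ((d : ℂ) ^ 2)⁻¹ • e (n + 1)
  jones_rel : ∀ n, 1 ≤ n → ∀ x ∈ M n, e n * x * e n = E n x * e n
  markov : ∀ n, 1 ≤ n → E (n + 1) (e n) = ((d : ℂ) ^ 2)⁻¹ • (1 : B)
  pull_down : ∀ n, 1 ≤ n → ∀ x ∈ M (n + 1), ∃ y ∈ M n, x * e n = y * e n

/-- In a traceless Markov tower, for `n ≥ 1`, an element `x ∈ Mₙ` commutes with `eₙ`
iff `x ∈ M_{n-1}`; in particular `M_{n-1} = Mₙ ∩ {eₙ}'`, and any `x ∈ Mₙ` commuting with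
`eₙ` satisfies `x = Eₙ(x)`. -/
theorem MarkovTower.relative_commutant_jones
    {B : Type*} [Ring B] [StarRing B] [Algebra ℂ B] [StarModule ℂ B]
    [PartialOrder B] [StarOrderedRing B]
    (T : MarkovTower B) (n : ℕ) (hn : 1 ≤ n) :
    (∀ x ∈ T.M n, (x * T.e n = T.e n * x ↔ x ∈ T.M (n - 1))) ∧
    ((T.M (n - 1) : Set B) = (T.M n : Set B) ∩ {b : B | b * T.e n = T.e n * b}) ∧
    (∀ x ∈ T.M n, x * T.e n = T.e n * x → x = T.E n x) := by
  obtain ⟨m, rfl⟩ : ∃ m, n = m + 1 := ⟨n - 1, (Nat.succ_pred_eq_of_pos hn).symm⟩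
  have hm : (1:ℕ) ≤ m + 1 := hn
  have hd : ((T.d : ℂ) ^ 2)⁻¹ ≠ 0 := by
    apply inv_ne_zero
    exact pow_ne_zero _ (by exact_mod_cast T.d_pos.ne')
  -- Claim A: elements of M m commute with e (m+1)
  have claimA : ∀ x ∈ T.M m, x * T.e (m+1) = T.e (m+1) * x := by
    intro x hx
    have hx' : x ∈ T.M (m+1) := T.M_le m hx
    have h1 : T.e (m+1) * x * T.e (m+1) = x * T.e (m+1) := by
      rw [T.jones_rel (m+1) hm x hx', T.E_fix (m+1) hm x hx]
    have hxs : star x ∈ T.M m := star_mem hx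
    have hxs' : star x ∈ T.M (m+1) := T.M_le m hxs
    have h2 : T.e (m+1) * star x * T.e (m+1) = star x * T.e (m+1) := by
      rw [T.jones_rel (m+1) hm _ hxs', T.E_fix (m+1) hm _ hxs]
    have h3 := congrArg star h2
    simp only [star_mul, star_star, T.e_star (m+1) hm, ← mul_assoc] at h3
    -- h3 : e * x * e = e * x
    rw [← h3, h1]
  -- Claim B: commuting elements of M (m+1) are fixed by E (m+1)
  have key : ∀ y ∈ T.M (m+1), T.E (m+1+1) (y * T.e (m+1)) = ((T.d:ℂ)^2)⁻¹ • y := by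
    intro y hy
    have hb := T.E_bimod (m+2) (by omega) y hy 1 (one_mem _) (T.e (m+1)) (T.e_mem (m+1) hm)
    rw [mul_one, mul_one] at hb
    rw [hb, T.markov (m+1) hm, mul_smul_comm, mul_one]
  have claimB : ∀ x ∈ T.M (m+1), x * T.e (m+1) = T.e (m+1) * x → x = T.E (m+1) x := by
    intro x hx hc
    have hE : T.E (m+1) x ∈ T.M m := T.E_mem (m+1) hm x hx
    have h1 : x * T.e (m+1) = T.E (m+1) x * T.e (m+1) := by
      calc x * T.e (m+1) = x * (T.e (m+1) * T.e (m+1)) := by rw [T.e_idem (m+1) hm]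
        _ = T.e (m+1) * x * T.e (m+1) := by rw [← mul_assoc, ← hc]
        _ = T.E (m+1) x * T.e (m+1) := T.jones_rel (m+1) hm x hx
    have h2 := congrArg (T.E (m+1+1)) h1
    rw [key x hx, key (T.E (m+1) x) (T.M_le m hE)] at h2
    have := congrArg (fun z => ((T.d:ℂ)^2)⁻¹⁻¹ • z) h2
    simpa [smul_smul, mul_inv_cancel₀ (pow_ne_zero 2 (show (T.d:ℂ) ≠ 0 by exact_mod_cast T.d_pos.ne'))] using this
  have part1 : ∀ x ∈ T.M (m+1), (x * T.e (m+1) = T.e (m+1) * x ↔ x ∈ T.M m) := by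
    intro x hx
    constructor
    · intro h
      have hxE := claimB x hx h
      rw [hxE]
      exact T.E_mem (m+1) hm x hx
    · exact claimA x
  refine ⟨part1, ?_, claimB⟩
  ext b
  constructor
  · intro hb
    exact ⟨T.M_le m hb, claimA b hb⟩
  · intro ⟨hb1, hb2⟩
    exact (part1 b hb1).mp hb2
end

section
/- In a standard λ-lattice (A_{i,j})_{0≤i≤j} of modulus d > 0, the 2-shift map satisfies the shift (intertwining) property: for every x ∈ A_{i,j}, (e_{i+1} e_{i+2} ⋯ e_{j+1}) · x = S_{i,j}(x) · (e_{i+1} e_{i+2} ⋯ e_{j+1}); equivalently, taking adjoints, x · (e_{j+1} e_j ⋯ e_{i+1}) = (e_{j+1} e_j ⋯ e_{i+1}) · S_{i,j}(x). -/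
/-- A standard λ-lattice `(A_{i,j})_{0 ≤ i ≤ j}` of modulus `d > 0`: a doubly indexed system of
finite-dimensional unital star subalgebras `A i j` of an ambient complex star-ordered algebra
`B`, with `A i i = ℂ`, inclusions `A i j ≤ A k l` for `k ≤ i ≤ j ≤ l`, faithful horizontal and
vertical conditional expectations `Er i j : A i j → A i (j-1)` and `El i j : A i j → A (i+1) j`
forming commuting squares, Jones projections `e j ∈ A i k` (for `i ≤ j`, `j + 1 ≤ k`)
satisfying the Temperley–Lieb–Jones relations, the implementation relations
`e_j x e_j = Er_{i,j}(x) e_j` and `e_i x e_i = El_{i,j}(x) e_i`, the Markov conditions,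
the pull-down conditions, and the standardness condition `[A_{i,j}, A_{k,l}] = 0` for
`i ≤ j ≤ k ≤ l`. -/
structure StandardLambdaLattice (B : Type*) [Ring B] [StarRing B] [Algebra ℂ B]
    [StarModule ℂ B] [PartialOrder B] [StarOrderedRing B] where
  /-- the lattice of algebras -/
  A : ℕ → ℕ → StarSubalgebra ℂ B
  /-- the modulus -/
  d : ℝ
  d_pos : 0 < d
  finDim : ∀ i j, FiniteDimensional ℂ (A i j)
  A_diag : ∀ i, A i i = ⊥
  A_mono : ∀ i j k l, k ≤ i → i ≤ j → j ≤ l → A i j ≤ A k l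
  /-- the horizontal (right) conditional expectations -/
  Er : ℕ → ℕ → B →ₗ[ℂ] B
  /-- the vertical (left) conditional expectations -/
  El : ℕ → ℕ → B →ₗ[ℂ] B
  /-- the Jones projections -/
  e : ℕ → B
  Er_mem : ∀ i j, i < j → ∀ x ∈ A i j, Er i j x ∈ A i (j - 1)
  Er_fix : ∀ i j, i < j → ∀ a ∈ A i (j - 1), Er i j a = a
  Er_bimod : ∀ i j, i < j → ∀ a ∈ A i (j - 1), ∀ b ∈ A i (j - 1), ∀ x ∈ A i j,
    Er i j (a * x * b) = a * Er i j x * b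
  Er_pos : ∀ i j, i < j → ∀ x ∈ A i j, 0 ≤ Er i j (star x * x)
  Er_faithful : ∀ i j, i < j → ∀ x ∈ A i j, Er i j (star x * x) = 0 → x = 0
  El_mem : ∀ i j, i < j → ∀ x ∈ A i j, El i j x ∈ A (i + 1) j
  El_fix : ∀ i j, i < j → ∀ a ∈ A (i + 1) j, El i j a = a
  El_bimod : ∀ i j, i < j → ∀ a ∈ A (i + 1) j, ∀ b ∈ A (i + 1) j, ∀ x ∈ A i j,
    El i j (a * x * b) = a * El i j x * b
  El_pos : ∀ i j, i < j → ∀ x ∈ A i j, 0 ≤ El i j (star x * x)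
  El_faithful : ∀ i j, i < j → ∀ x ∈ A i j, El i j (star x * x) = 0 → x = 0
  comm_sq : ∀ i j, i < j → ∀ x ∈ A i (j + 1),
    El i j (Er i (j + 1) x) = Er (i + 1) (j + 1) (El i (j + 1) x)
  e_mem : ∀ i j k, 1 ≤ j → i ≤ j → j + 1 ≤ k → e j ∈ A i k
  e_idem : ∀ j, 1 ≤ j → e j * e j = e j
  e_star : ∀ j, 1 ≤ j → star (e j) = e j
  e_comm : ∀ m n, 1 ≤ m → 1 ≤ n → m + 1 < n → e m * e n = e n * e m
  e_tlj_up : ∀ j, 1 ≤ j → e j * e (j + 1) * e j = ((d : ℂ) ^ 2)⁻¹ • e j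
  e_tlj_down : ∀ j, 1 ≤ j → e (j + 1) * e j * e (j + 1) = ((d : ℂ) ^ 2)⁻¹ • e (j + 1)
  e_Er : ∀ i j, i + 1 ≤ j → ∀ x ∈ A i j, e j * x * e j = Er i j x * e j
  e_El : ∀ i j, 1 ≤ i → i + 1 ≤ j → ∀ x ∈ A i j, e i * x * e i = El i j x * e i
  markov_Er : ∀ i j, i + 1 ≤ j → Er i (j + 1) (e j) = ((d : ℂ) ^ 2)⁻¹ • (1 : B)
  markov_El : ∀ j k, 1 ≤ j → j + 1 ≤ k → El (j - 1) k (e j) = ((d : ℂ) ^ 2)⁻¹ • (1 : B)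
  pull_down_r : ∀ i j, i ≤ j → 1 ≤ j → ∀ x ∈ A i (j + 1),
    (((d : ℂ) ^ 2) • Er i (j + 1) (x * e j)) * e j = x * e j
  pull_down_l : ∀ i j, 1 ≤ i → i ≤ j → ∀ x ∈ A (i - 1) j,
    (((d : ℂ) ^ 2) • El (i - 1) j (x * e i)) * e i = x * e i
  standard : ∀ i j k l, i ≤ j → j ≤ k → k ≤ l → ∀ x ∈ A i j, ∀ y ∈ A k l, x * y = y * x

namespace StandardLambdaLattice

variable {B : Type*} [Ring B] [StarRing B] [Algebra ℂ B] [StarModule ℂ B]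
  [PartialOrder B] [StarOrderedRing B]

/-- The ascending product of Jones projections `e_{i+1} e_{i+2} ⋯ e_j`
(equal to `1` when `j ≤ i`). -/
def ascProd (L : StandardLambdaLattice B) (i j : ℕ) : B :=
  ((List.range' (i + 1) (j - i)).map L.e).prod

/-- The descending product of Jones projections `e_{j+1} e_j ⋯ e_{i+1}`. -/
def descProd (L : StandardLambdaLattice B) (i j : ℕ) : B :=
  (((List.range' (i + 1) (j + 1 - i)).map L.e).reverse).prod

/-- The 2-shift map
`S_{i,j}(x) := d^{2j-2i+2} · El_{i,j+2} (e_{i+1} e_{i+2} ⋯ e_j · x · e_{j+1} e_j ⋯ e_{i+1})`. -/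
noncomputable def S (L : StandardLambdaLattice B) (i j : ℕ) (x : B) : B :=
  ((L.d : ℂ) ^ (2 * (j - i) + 2)) • L.El i (j + 2) (L.ascProd i j * x * L.descProd i j)

end StandardLambdaLattice

namespace StandardLambdaLattice

variable {B : Type*} [Ring B] [StarRing B] [Algebra ℂ B] [StarModule ℂ B]
  [PartialOrder B] [StarOrderedRing B] (L : StandardLambdaLattice B)

/-- Auxiliary ascending product of Jones projections `e_s e_{s+1} ⋯ e_{s+n-1}`. -/
def eP (s n : ℕ) : B := ((List.range' s n).map L.e).prod

/-- Auxiliary descending product of Jones projections `e_{s+n-1} ⋯ e_{s+1} e_s`. -/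
def eQ (s n : ℕ) : B := (((List.range' s n).map L.e).reverse).prod

lemma eP_zero (s : ℕ) : L.eP s 0 = 1 := rfl

lemma eQ_zero (s : ℕ) : L.eQ s 0 = 1 := rfl

lemma eP_succ (s n : ℕ) : L.eP s (n+1) = L.eP s n * L.e (s+n) := by
  simp [eP, List.range'_concat]

lemma eP_cons (s n : ℕ) : L.eP s (n+1) = L.e s * L.eP (s+1) n := by
  simp [eP, List.range'_succ]

lemma eQ_succ (s n : ℕ) : L.eQ s (n+1) = L.e (s+n) * L.eQ s n := by
  simp [eQ, List.range'_concat]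

lemma eQ_cons (s n : ℕ) : L.eQ s (n+1) = L.eQ (s+1) n * L.e s := by
  simp [eQ, List.range'_succ]

lemma eP_mem {s n i k : ℕ} (h1 : 1 ≤ s) (h2 : i ≤ s) (h3 : s + n ≤ k) :
    L.eP s n ∈ L.A i k := by
  apply list_prod_mem
  intro x hx
  simp only [List.mem_map] at hx
  obtain ⟨m, hm, rfl⟩ := hx
  rw [List.mem_range'_1] at hm
  exact L.e_mem i m k (by omega) (by omega) (by omega)

lemma eQ_mem {s n i k : ℕ} (h1 : 1 ≤ s) (h2 : i ≤ s) (h3 : s + n ≤ k) :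
    L.eQ s n ∈ L.A i k := by
  apply list_prod_mem
  intro x hx
  simp only [List.mem_reverse, List.mem_map] at hx
  obtain ⟨m, hm, rfl⟩ := hx
  rw [List.mem_range'_1] at hm
  exact L.e_mem i m k (by omega) (by omega) (by omega)

lemma star_eP {s : ℕ} (h1 : 1 ≤ s) : ∀ n, star (L.eP s n) = L.eQ s n := by
  intro n
  induction n with
  | zero => simp [eP_zero, eQ_zero]
  | succ n ih =>
      rw [eP_succ, eQ_succ, star_mul, ih, L.e_star (s+n) (by omega)]

lemma star_eQ {s : ℕ} (h1 : 1 ≤ s) (n : ℕ) : star (L.eQ s n) = L.eP s n := by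
  rw [← L.star_eP h1 n, star_star]

/-- The key Temperley–Lieb collapse:
`(e_{s+n} ⋯ e_{s+1} e_s)(e_{s+1} ⋯ e_{s+n}) = d^{-2n} e_{s+n}`. -/
lemma eQ_mul_eP {s : ℕ} (h1 : 1 ≤ s) :
    ∀ n, L.eQ s (n+1) * L.eP (s+1) n = (((L.d : ℂ)^2)⁻¹)^n • L.e (s+n) := by
  intro n
  induction n with
  | zero => simp [eQ_succ, eQ_zero, eP_zero]
  | succ n ih =>
      rw [show s+(n+1) = s+n+1 by omega]
      have e1 : L.eQ s (n+2) = L.e (s+n+1) * L.eQ s (n+1) := by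
        have h := L.eQ_succ s (n+1)
        rwa [show s+(n+1) = s+n+1 by omega] at h
      have e2 : L.eP (s+1) (n+1) = L.eP (s+1) n * L.e (s+n+1) := by
        have h := L.eP_succ (s+1) n
        rwa [show s+1+n = s+n+1 by omega] at h
      have e3 : L.e (s+n+1) * L.eQ s (n+1) * (L.eP (s+1) n * L.e (s+n+1))
          = L.e (s+n+1) * (L.eQ s (n+1) * L.eP (s+1) n) * L.e (s+n+1) := by
        noncomm_ring
      rw [e1, e2, e3, ih, mul_smul_comm, smul_mul_assoc,
        L.e_tlj_down (s+n) (by omega), smul_smul, ← pow_succ]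

lemma d_sq_ne_zero : ((L.d : ℂ)^2) ≠ 0 := by
  have h : (L.d : ℂ) ≠ 0 := by
    simpa using L.d_pos.ne'
  exact pow_ne_zero _ h

/-- Positive linear maps preserve self-adjointness: for self-adjoint `a ∈ A i j`,
`El i j a` is self-adjoint. -/
lemma El_sa {i j : ℕ} (hij : i < j) {a : B} (ha : a ∈ L.A i j) (hsa : star a = a) :
    star (L.El i j a) = L.El i j a := by
  have h1a : (1 : B) + a ∈ L.A i j := add_mem (one_mem _) ha
  have hp : 0 ≤ L.El i j (star ((1:B)+a) * ((1:B)+a)) := L.El_pos i j hij _ h1a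
  have hq : 0 ≤ L.El i j (star a * a) := L.El_pos i j hij _ ha
  have hrep : a = (2:ℂ)⁻¹ • (star ((1:B)+a) * ((1:B)+a) - 1 - star a * a) := by
    rw [star_add, star_one, hsa]
    have h : ((1:B) + a) * ((1:B) + a) - 1 - a * a = a + a := by noncomm_ring
    rw [h, ← two_smul ℂ a, smul_smul]
    norm_num
  have h2 : L.El i j a = (2:ℂ)⁻¹ •
      (L.El i j (star ((1:B)+a) * ((1:B)+a)) - L.El i j 1 - L.El i j (star a * a)) := by
    conv_lhs => rw [hrep]
    rw [map_smul, map_sub, map_sub]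
  have hone : L.El i j (1:B) = 1 := L.El_fix i j hij 1 (one_mem _)
  rw [h2, hone, star_smul, star_sub, star_sub, star_one,
    (IsSelfAdjoint.of_nonneg hp).star_eq, (IsSelfAdjoint.of_nonneg hq).star_eq]
  congr 1
  simp

/-- The conditional expectations `El` are star-preserving. -/
lemma El_star {i j : ℕ} (hij : i < j) {z : B} (hz : z ∈ L.A i j) :
    L.El i j (star z) = star (L.El i j z) := by
  obtain ⟨a, ha_def⟩ : ∃ a : B, a = z + star z := ⟨_, rfl⟩
  obtain ⟨c, hc_def⟩ : ∃ c : B, c = Complex.I • (z - star z) := ⟨_, rfl⟩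
  have haA : a ∈ L.A i j := ha_def ▸ add_mem hz (star_mem hz)
  have hcA : c ∈ L.A i j := hc_def ▸ SMulMemClass.smul_mem _ (sub_mem hz (star_mem hz))
  have hasa : star a = a := by rw [ha_def, star_add, star_star, add_comm]
  have hcsa : star c = c := by
    rw [hc_def, star_smul, star_sub, star_star, Complex.star_def, Complex.conj_I,
      neg_smul, ← smul_neg, neg_sub]
  have h1 := L.El_sa hij haA hasa
  have h2 := L.El_sa hij hcA hcsa
  have key1 : (2:ℂ)⁻¹ • (a - Complex.I • c) = z := by
    rw [ha_def, hc_def, smul_smul, Complex.I_mul_I, neg_one_smul, sub_neg_eq_add]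
    have h : z + star z + (z - star z) = (2:ℂ) • z := by rw [two_smul]; abel
    rw [h, smul_smul]
    norm_num
  have key2 : (2:ℂ)⁻¹ • (a + Complex.I • c) = star z := by
    rw [ha_def, hc_def, smul_smul, Complex.I_mul_I, neg_one_smul]
    have h : z + star z + -(z - star z) = (2:ℂ) • star z := by rw [two_smul]; abel
    rw [h, smul_smul]
    norm_num
  have hEz : L.El i j z = (2:ℂ)⁻¹ • (L.El i j a - Complex.I • L.El i j c) := by
    conv_lhs => rw [← key1]
    rw [map_smul, map_sub, map_smul]
  have hEsz : L.El i j (star z) = (2:ℂ)⁻¹ • (L.El i j a + Complex.I • L.El i j c) := by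
    conv_lhs => rw [← key2]
    rw [map_smul, map_add, map_smul]
  rw [hEz, hEsz, star_smul, star_sub, star_smul, h1, h2, Complex.star_def,
    Complex.conj_I, neg_smul, sub_neg_eq_add]
  congr 1
  simp [map_ofNat]

lemma comm_e_top {i j : ℕ} (hij : i ≤ j) {x : B} (hx : x ∈ L.A i j) :
    x * L.e (j+1) = L.e (j+1) * x :=
  L.standard i j j (j+2) hij le_rfl (by omega) x hx _
    (L.e_mem j (j+1) (j+2) (by omega) (by omega) le_rfl)

lemma ascProd_eP (i n : ℕ) : L.ascProd i (i + n) = L.eP (i+1) n := by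
  have h : i + n - i = n := by omega
  rw [ascProd, h]; rfl

lemma ascProd_eP' (i n : ℕ) : L.ascProd i (i + n + 1) = L.eP (i+1) (n+1) := by
  have h : i + n + 1 - i = n + 1 := by omega
  rw [ascProd, h]; rfl

lemma descProd_eQ (i n : ℕ) : L.descProd i (i + n) = L.eQ (i+1) (n+1) := by
  have h : i + n + 1 - i = n + 1 := by omega
  rw [descProd, h]; rfl

/-- The first half of the shift property:
`S_{i,j}(x) (e_{i+1} ⋯ e_{j+1}) = (e_{i+1} ⋯ e_{j+1}) x`. -/
lemma S_mul_ascProd {i n : ℕ} {x : B} (hx : x ∈ L.A i (i + n)) :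
    L.S i (i + n) x * L.eP (i+1) (n+1) = L.eP (i+1) (n+1) * x := by
  have hd2 : ((L.d : ℂ)^2) ≠ 0 := L.d_sq_ne_zero
  have harr : i + 1 + n = i + n + 1 := by omega
  set y : B := L.eP (i+1) n * x * L.eQ (i+1+1) n with hy
  have hw : L.eP (i+1) n * x * L.eQ (i+1) (n+1) = y * L.e (i+1) := by
    rw [L.eQ_cons (i+1) n, ← mul_assoc, hy]
  have hy_mem : y ∈ L.A i (i+n+2) := by
    rw [hy]
    refine mul_mem (mul_mem (L.eP_mem (by omega) (by omega) (by omega)) ?_)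
      (L.eQ_mem (by omega) (by omega) (by omega))
    exact L.A_mono i (i+n) i (i+n+2) le_rfl (by omega) (by omega) hx
  have hpd := L.pull_down_l (i+1) (i+n+2) (by omega) (by omega) y hy_mem
  simp only [Nat.add_sub_cancel] at hpd
  have h5 : L.El i (i+n+2) (y * L.e (i+1)) * L.e (i+1)
      = ((L.d : ℂ)^2)⁻¹ • (y * L.e (i+1)) := by
    have h := congrArg (fun z : B => ((L.d : ℂ)^2)⁻¹ • z) hpd
    simp only [smul_mul_assoc, smul_smul, inv_mul_cancel₀ hd2, one_smul] at h
    exact h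
  have hQP := L.eQ_mul_eP (s := i+1) (by omega) n
  rw [harr] at hQP
  have hxe : x * L.e (i+n+1) = L.e (i+n+1) * x :=
    L.comm_e_top (Nat.le_add_right i n) hx
  have hscal : (L.d : ℂ)^(2*n+2) * ((L.d : ℂ)^2)⁻¹ * (((L.d : ℂ)^2)⁻¹)^n = 1 := by
    rw [mul_assoc, ← pow_succ', inv_pow, show 2*n+2 = 2*(n+1) by ring, pow_mul,
      mul_inv_cancel₀ (pow_ne_zero _ hd2)]
  have hS : L.S i (i+n) x
      = ((L.d : ℂ)^(2*n+2)) • L.El i (i+n+2) (y * L.e (i+1)) := by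
    rw [S, show i+n-i = n by omega, L.ascProd_eP, L.descProd_eQ, hw]
  calc L.S i (i+n) x * L.eP (i+1) (n+1)
      = ((L.d : ℂ)^(2*n+2)) •
          (L.El i (i+n+2) (y * L.e (i+1)) * L.e (i+1) * L.eP (i+1+1) n) := by
        rw [hS, L.eP_cons (i+1) n]
        simp only [smul_mul_assoc, mul_assoc]
    _ = ((L.d : ℂ)^(2*n+2)) • (((L.d : ℂ)^2)⁻¹ • (y * L.e (i+1) * L.eP (i+1+1) n)) := by
        rw [h5]
        simp only [smul_mul_assoc]
    _ = ((L.d : ℂ)^(2*n+2) * ((L.d : ℂ)^2)⁻¹) •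
          (L.eP (i+1) n * x * (L.eQ (i+1) (n+1) * L.eP (i+1+1) n)) := by
        rw [← hw, smul_smul]
        simp only [mul_assoc]
    _ = ((L.d : ℂ)^(2*n+2) * ((L.d : ℂ)^2)⁻¹ * (((L.d : ℂ)^2)⁻¹)^n) •
          (L.eP (i+1) n * (x * L.e (i+n+1))) := by
        rw [hQP, mul_smul_comm, smul_smul]
        simp only [mul_assoc]
    _ = L.eP (i+1) n * (L.e (i+n+1) * x) := by
        rw [hxe, hscal, one_smul]
    _ = L.eP (i+1) (n+1) * x := by
        have h := L.eP_succ (i+1) n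
        rw [harr] at h
        rw [h, mul_assoc]

/-- The 2-shift intertwines with the star operation. -/
lemma S_star {i n : ℕ} {x : B} (hx : x ∈ L.A i (i + n)) :
    star (L.S i (i + n) x) = L.S i (i + n) (star x) := by
  have harr : i + 1 + n = i + n + 1 := by omega
  have hwmem : L.ascProd i (i+n) * x * L.descProd i (i+n) ∈ L.A i (i+n+2) := by
    rw [L.ascProd_eP, L.descProd_eQ]
    refine mul_mem (mul_mem (L.eP_mem (by omega) (by omega) (by omega)) ?_)
      (L.eQ_mem (by omega) (by omega) (by omega))
    exact L.A_mono i (i+n) i (i+n+2) le_rfl (by omega) (by omega) hx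
  have hxe : L.e (i+n+1) * star x = star x * L.e (i+n+1) :=
    (L.comm_e_top (Nat.le_add_right i n) (star_mem hx)).symm
  have hgoal : L.eP (i+1) (n+1) * (star x * L.eQ (i+1) n)
      = L.eP (i+1) n * star x * L.eQ (i+1) (n+1) := by
    have hp := L.eP_succ (i+1) n
    have hq := L.eQ_succ (i+1) n
    rw [harr] at hp hq
    rw [hp, hq]
    calc L.eP (i+1) n * L.e (i+n+1) * (star x * L.eQ (i+1) n)
        = L.eP (i+1) n * (L.e (i+n+1) * star x) * L.eQ (i+1) n := by noncomm_ring
      _ = L.eP (i+1) n * (star x * L.e (i+n+1)) * L.eQ (i+1) n := by rw [hxe]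
      _ = L.eP (i+1) n * star x * (L.e (i+n+1) * L.eQ (i+1) n) := by noncomm_ring
  have hstarw : star (L.ascProd i (i+n) * x * L.descProd i (i+n))
      = L.ascProd i (i+n) * star x * L.descProd i (i+n) := by
    rw [L.ascProd_eP, L.descProd_eQ, star_mul, star_mul, L.star_eQ (by omega),
      L.star_eP (by omega)]
    exact hgoal
  rw [S, S, show i+n-i = n by omega, star_smul,
    ← L.El_star (show i < i+n+2 by omega) hwmem, hstarw]
  congr 1
  rw [Complex.star_def, map_pow, Complex.conj_ofReal]

end StandardLambdaLattice

/-- The shift (intertwining) property of the 2-shift map: for `x ∈ A_{i,j}`,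
`(e_{i+1} e_{i+2} ⋯ e_{j+1}) x = S_{i,j}(x) (e_{i+1} e_{i+2} ⋯ e_{j+1})`, and, taking
adjoints, `x (e_{j+1} e_j ⋯ e_{i+1}) = (e_{j+1} e_j ⋯ e_{i+1}) S_{i,j}(x)`. -/
theorem StandardLambdaLattice.twoShift_shift_property
    {B : Type*} [Ring B] [StarRing B] [Algebra ℂ B] [StarModule ℂ B]
    [PartialOrder B] [StarOrderedRing B]
    (L : StandardLambdaLattice B) (i j : ℕ) (hij : i ≤ j) (x : B) (hx : x ∈ L.A i j) :
    L.ascProd i (j + 1) * x = L.S i j x * L.ascProd i (j + 1) ∧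
    x * L.descProd i j = L.descProd i j * L.S i j x := by
  obtain ⟨n, rfl⟩ : ∃ n, j = i + n := ⟨j - i, by omega⟩
  constructor
  · rw [L.ascProd_eP']
    exact (L.S_mul_ascProd hx).symm
  · have key2 := L.S_mul_ascProd (star_mem hx)
    have h := congrArg star key2
    rw [star_mul, star_mul, L.star_eP (by omega), star_star,
      L.S_star (star_mem hx), star_star] at h
    rw [L.descProd_eQ]
    exact h.symm
end

section
/- Let (Λ, ω) be a balanced d-fair bipartite graph (d > 0). Then Λ is locally finite with valence uniformly bounded by d²: for every vertex P, the set {e ∈ E(Λ) : s(e) = P} is finite with cardinality at most d², and likewise the set {e ∈ E(Λ) : t(e) = P} is finite with cardinality at most d². -/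
/-- A balanced `d`-fair bipartite graph `(Λ, ω)`: a bipartite graph with vertex set
`V = V₀ ⊔ V₁`, source and target maps `s, t`, an involution `e ↦ ē` on edges switching
sources and targets, and a positive edge weighting `ω` satisfying `ω(e)·ω(ē) = 1`
(balanced) and, for every vertex `P`, `∑_{s(e) = P} ω(e) = d` (`d`-fair). -/
structure BalancedFairBipartiteGraph where
  /-- the vertex set -/
  V : Type*
  /-- the edge set -/
  Edge : Type*
  /-- the source map -/
  s : Edge → V
  /-- the target map -/
  t : Edge → V
  /-- the even vertices -/
  V0 : Set V
  /-- the odd vertices -/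
  V1 : Set V
  cover : V0 ∪ V1 = Set.univ
  disj : Disjoint V0 V1
  bipartite : ∀ e : Edge, (s e ∈ V0 ∧ t e ∈ V1) ∨ (s e ∈ V1 ∧ t e ∈ V0)
  /-- the involution on edges -/
  bar : Edge → Edge
  bar_invol : Function.Involutive bar
  s_bar : ∀ e, s (bar e) = t e
  t_bar : ∀ e, t (bar e) = s e
  /-- the edge weighting -/
  w : Edge → ℝ
  w_pos : ∀ e, 0 < w e
  /-- the fairness constant -/
  d : ℝ
  d_pos : 0 < d
  balanced : ∀ e, w e * w (bar e) = 1
  fair : ∀ P : V, HasSum (fun e : {e : Edge // s e = P} => w e.1) d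


private lemma card_le_of_hasSum {ι : Type*} {f : ι → ℝ} {d : ℝ} (hd : 0 < d)
    (hsum : HasSum f d) (hf : ∀ i, d⁻¹ ≤ f i) :
    Finite ι ∧ (Nat.card ι : ℝ) ≤ d ^ 2 := by
  have hpos : ∀ i, 0 ≤ f i := fun i => le_trans (by positivity) (hf i)
  have key : ∀ F : Finset ι, (F.card : ℝ) ≤ d ^ 2 := by
    intro F
    have h1 : (F.card : ℝ) * d⁻¹ ≤ ∑ i ∈ F, f i := by
      calc (F.card : ℝ) * d⁻¹ = ∑ _i ∈ F, d⁻¹ := by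
            rw [Finset.sum_const, nsmul_eq_mul]
        _ ≤ ∑ i ∈ F, f i := Finset.sum_le_sum fun i _ => hf i
    have h2 : ∑ i ∈ F, f i ≤ d := sum_le_hasSum F (fun i _ => hpos i) hsum
    have := h1.trans h2
    calc (F.card : ℝ) = (F.card : ℝ) * d⁻¹ * d := by
          field_simp
      _ ≤ d * d := by nlinarith
      _ = d ^ 2 := (sq d).symm
  have hfin : Finite ι := by
    by_contra h
    rw [not_finite_iff_infinite] at h
    obtain ⟨F, hF⟩ := Infinite.exists_subset_card_eq ι (⌈d ^ 2⌉₊ + 1)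
    have h1 := key F
    rw [hF] at h1
    have h2 : d ^ 2 ≤ (⌈d ^ 2⌉₊ : ℝ) := Nat.le_ceil _
    push_cast at h1
    linarith
  refine ⟨hfin, ?_⟩
  have : Fintype ι := Fintype.ofFinite ι
  rw [Nat.card_eq_fintype_card, ← Finset.card_univ]
  exact key Finset.univ

/-- A balanced `d`-fair bipartite graph is locally finite, with valence uniformly bounded
by `d²`: for every vertex `P`, the set of edges with source `P` is finite of cardinality at
most `d²`, and likewise for the set of edges with target `P`. -/
theorem BalancedFairBipartiteGraph.locally_finite
    (G : BalancedFairBipartiteGraph) (P : G.V) :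
    ({e : G.Edge | G.s e = P}.Finite ∧
      (({e : G.Edge | G.s e = P}.ncard : ℝ) ≤ G.d ^ 2)) ∧
    ({e : G.Edge | G.t e = P}.Finite ∧
      (({e : G.Edge | G.t e = P}.ncard : ℝ) ≤ G.d ^ 2)) := by
  have w_le : ∀ e, G.w e ≤ G.d := fun e =>
    le_hasSum (G.fair (G.s e)) ⟨e, rfl⟩ (fun e' _ => (G.w_pos e'.1).le)
  have w_ge : ∀ e, G.d⁻¹ ≤ G.w e := by
    intro e
    have hb := G.balanced e
    have hpos := G.w_pos (G.bar e)
    have hle := w_le (G.bar e)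
    rw [inv_le_iff_one_le_mul₀ G.d_pos]
    calc (1 : ℝ) = G.w e * G.w (G.bar e) := hb.symm
      _ ≤ G.w e * G.d := by nlinarith [G.w_pos e]
  let E : {e : G.Edge // G.t e = P} ≃ {e : G.Edge // G.s e = P} :=
    { toFun := fun e => ⟨G.bar e.1, by rw [G.s_bar]; exact e.2⟩
      invFun := fun e => ⟨G.bar e.1, by rw [G.t_bar]; exact e.2⟩
      left_inv := fun e => Subtype.ext (G.bar_invol e.1)
      right_inv := fun e => Subtype.ext (G.bar_invol e.1) }
  have hs := card_le_of_hasSum G.d_pos (G.fair P) (fun e => w_ge e.1)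
  have ht := card_le_of_hasSum G.d_pos
    ((E.hasSum_iff (f := fun e : {e : G.Edge // G.s e = P} => G.w e.1)).mpr (G.fair P))
    (fun e : {e : G.Edge // G.t e = P} => by exact w_ge (G.bar e.1))
  constructor
  · exact ⟨Set.finite_coe_iff.mp hs.1, by rw [← Nat.card_coe_set_eq]; exact hs.2⟩
  · exact ⟨Set.finite_coe_iff.mp ht.1, by rw [← Nat.card_coe_set_eq]; exact ht.2⟩
end

section
/- Let B be a finite-dimensional unital C*-algebra, A ⊆ B a unital C*-subalgebra, and E : B → A a faithful conditional expectation. Then there exists a finite family u₁, …, u_n ∈ B (a Pimsner–Popa orthonormal basis) such that x = Σ_{i=1}^{n} u_i · E(u_i* x) for all x ∈ B. -/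
open Complex in
private lemma aux_E_star {B : Type*} [Ring B] [StarRing B] [Module ℂ B]
    [StarModule ℂ B] [SMulCommClass ℂ B B] [IsScalarTower ℂ B B]
    [PartialOrder B] [StarOrderedRing B]
    (E : B →ₗ[ℂ] B) (hpos : ∀ x : B, 0 ≤ E (star x * x)) :
    ∀ z : B, E (star z) = star (E z) := by
  have key : ∀ x y : B, star (E (star x * y)) = E (star y * x) := by
    intro x y
    set P : ℂ → B := fun c => E (star (y + c • x) * (y + c • x)) with hP
    have expand : ∀ c : ℂ, P c =
        E (star y * y) + c • E (star y * x) + (starRingEnd ℂ c) • E (star x * y)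
          + ((starRingEnd ℂ c) * c) • E (star x * x) := by
      intro c
      rw [hP]
      simp only
      rw [star_add, star_smul]
      simp only [add_mul, mul_add, smul_mul_assoc, mul_smul_comm, map_add, map_smul, smul_smul,
        Complex.star_def]
      module
    have hsa : ∀ c : ℂ, star (P c) = P c := fun c => (IsSelfAdjoint.of_nonneg (hpos _))
    have hA : (4:ℂ) • E (star x * y) = P 1 + I • P I - P (-1) - I • P (-I) := by
      rw [expand 1, expand I, expand (-1), expand (-I)]
      simp only [map_one, map_neg, Complex.conj_I, smul_add, smul_smul, neg_mul, mul_neg,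
        Complex.I_mul_I, neg_neg, one_mul, mul_one, map_ofNat]
      module
    have hB : (4:ℂ) • E (star y * x) = P 1 - I • P I - P (-1) + I • P (-I) := by
      rw [expand 1, expand I, expand (-1), expand (-I)]
      simp only [map_one, map_neg, Complex.conj_I, smul_add, smul_smul, neg_mul, mul_neg,
        Complex.I_mul_I, neg_neg, one_mul, mul_one, map_ofNat]
      module
    have h4 : (4:ℂ) • star (E (star x * y)) = (4:ℂ) • E (star y * x) := by
      have h := congrArg star hA
      simp only [star_add, star_sub, star_smul, Complex.star_def, Complex.conj_I, hsa,
        map_ofNat] at h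
      rw [h, hB]
      module
    have h40 : (4:ℂ) ≠ 0 := by norm_num
    exact smul_right_injective B h40 h4
  intro z
  simpa using (key 1 z).symm

open scoped ComplexOrder

private lemma aux_trace_pos {B : Type*} [CStarAlgebra B] [PartialOrder B] [StarOrderedRing B]
    [FiniteDimensional ℂ B] {a : B} (ha : 0 ≤ a) :
    0 ≤ LinearMap.trace ℂ B (Algebra.lmul ℂ B a) ∧
      (LinearMap.trace ℂ B (Algebra.lmul ℂ B a) = 0 → a = 0) := by
  classical
  set n := Module.finrank ℂ B with hn
  let bB : Module.Basis (Fin n) ℂ B := Module.finBasis ℂ B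
  set M : Matrix (Fin n) (Fin n) ℂ := LinearMap.toMatrixAlgEquiv bB (Algebra.lmul ℂ B a) with hM
  have htr : LinearMap.trace ℂ B (Algebra.lmul ℂ B a) = M.trace :=
    LinearMap.trace_eq_matrix_trace ℂ bB _
  have hsum : M.trace = M.charpoly.roots.sum := Matrix.trace_eq_sum_roots_charpoly M
  -- every root of the charpoly is in the spectrum of `a`
  have hroot : ∀ μ ∈ M.charpoly.roots, μ ∈ spectrum ℂ a := by
    intro μ hμ
    have hr : M.charpoly.IsRoot μ := (Polynomial.mem_roots'.mp hμ).2
    rw [spectrum.mem_iff]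
    intro hunit
    have h1 : IsUnit (Algebra.lmul ℂ B (algebraMap ℂ B μ - a)) := hunit.map (Algebra.lmul ℂ B)
    have h2 : Algebra.lmul ℂ B (algebraMap ℂ B μ - a)
        = algebraMap ℂ (Module.End ℂ B) μ - Algebra.lmul ℂ B a := by
      rw [map_sub, AlgHom.commutes]
    rw [h2] at h1
    have h3 : IsUnit (LinearMap.det (algebraMap ℂ (Module.End ℂ B) μ - Algebra.lmul ℂ B a)) :=
      h1.map LinearMap.det
    have h4 : M.charpoly.eval μ
        = LinearMap.det (algebraMap ℂ (Module.End ℂ B) μ - Algebra.lmul ℂ B a) := by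
      rw [← LinearMap.det_toMatrix bB]
      have h5 : LinearMap.toMatrix bB bB (algebraMap ℂ (Module.End ℂ B) μ - Algebra.lmul ℂ B a)
          = (M.charmatrix).map (Polynomial.eval μ) := by
        ext i j
        rw [Matrix.map_apply, Matrix.charmatrix_apply]
        simp only [map_sub, Algebra.algebraMap_eq_smul_one, map_smul, LinearMap.toMatrix_one]
        by_cases hij : i = j <;>
          simp [hij, Matrix.diagonal_apply, Matrix.one_apply, Matrix.smul_apply, hM,
            LinearMap.toMatrixAlgEquiv, Polynomial.eval_sub, Polynomial.eval_X,
            Polynomial.eval_C]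
      rw [h5, Matrix.charpoly, ← Polynomial.coe_evalRingHom, RingHom.map_det,
        RingHom.mapMatrix_apply]
    rw [hr.eq_zero] at h4
    rw [← h4] at h3
    exact (not_isUnit_zero h3 : False)
  have hnn : ∀ μ ∈ M.charpoly.roots, (0:ℂ) ≤ μ :=
    fun μ hμ => spectrum_nonneg_of_nonneg ha (hroot μ hμ)
  constructor
  · rw [htr, hsum]; exact Multiset.sum_nonneg hnn
  · intro h0
    nontriviality B
    rw [htr, hsum] at h0
    -- all roots are zero
    have hzero : ∀ μ ∈ M.charpoly.roots, μ = 0 := by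
      intro μ hμ
      obtain ⟨t, ht⟩ := Multiset.exists_cons_of_mem hμ
      have htnn : (0:ℂ) ≤ t.sum := by
        refine Multiset.sum_nonneg fun x hx => hnn x ?_
        rw [ht]; exact Multiset.mem_cons_of_mem hx
      have : μ + t.sum = 0 := by rw [← Multiset.sum_cons, ← ht, h0]
      have hle : μ ≤ 0 := by
        have := add_le_add_left htnn μ
        rw [zero_add, add_comm] at this
        calc μ ≤ μ + t.sum := this
        _ = 0 := ‹μ + t.sum = 0›
      exact le_antisymm hle (hnn μ hμ)
    -- the charpoly is X ^ n
    have hcp : M.charpoly = Polynomial.X ^ n := by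
      have hm := M.charpoly_monic
      have hsplit : M.charpoly.Splits := IsAlgClosed.splits _
      have hprod := hsplit.eq_prod_roots_of_monic hm
      have hcard : M.charpoly.roots.card = n := by
        rw [(Polynomial.splits_iff_card_roots).mp hsplit, Matrix.charpoly_natDegree_eq_dim,
          Fintype.card_fin]
      have hmapc : M.charpoly.roots.map (fun μ => Polynomial.X - Polynomial.C μ)
          = M.charpoly.roots.map (fun _ => (Polynomial.X : Polynomial ℂ)) :=
        Multiset.map_congr rfl (fun μ hμ => by rw [hzero μ hμ, map_zero, sub_zero])
      rw [hprod, hmapc, Multiset.map_const', Multiset.prod_replicate, hcard]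
    -- nilpotency
    have hMn : M ^ n = 0 := by
      have := M.aeval_self_charpoly
      rwa [hcp, map_pow, Polynomial.aeval_X] at this
    have hln : Algebra.lmul ℂ B a ^ n = 0 := by
      apply (LinearMap.toMatrixAlgEquiv bB).injective
      rw [map_pow, map_zero, ← hM, hMn]
    have han : a ^ n = 0 := by
      have : Algebra.lmul ℂ B (a ^ n) = 0 := by rw [map_pow, hln]
      calc a ^ n = Algebra.lmul ℂ B (a ^ n) 1 := by simp
      _ = 0 := by rw [this]; rfl
    -- a is selfadjoint and nilpotent, hence zero
    have hsa : IsSelfAdjoint a := .of_nonneg ha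
    obtain ⟨k, hk⟩ : ∃ k, n ≤ 2 ^ k := ⟨n, (Nat.lt_two_pow_self (n := n)).le⟩
    have h2k : a ^ (2 ^ k) = 0 := by
      rw [← Nat.add_sub_cancel' hk, pow_add, han, zero_mul]
    have hnorm : ∀ m : ℕ, ‖a ^ (2 ^ m)‖ = ‖a‖ ^ (2 ^ m) := by
      intro m
      induction m with
      | zero => simp
      | succ m ih =>
        have hx : IsSelfAdjoint (a ^ (2 ^ m)) := hsa.pow _
        have : a ^ (2 ^ (m+1)) = star (a ^ (2 ^ m)) * a ^ (2 ^ m) := by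
          rw [hx.star_eq, ← pow_add]
          ring_nf
        rw [this, CStarRing.norm_star_mul_self, ih, ← pow_add]
        ring_nf
    have : ‖a‖ ^ (2 ^ k) = 0 := by rw [← hnorm, h2k, norm_zero]
    have : ‖a‖ = 0 := pow_eq_zero_iff (pow_ne_zero k (by norm_num : (2:ℕ) ≠ 0)) |>.mp this
    exact norm_eq_zero.mp this

set_option maxHeartbeats 2000000 in
open scoped ComplexOrder in
/-- Pimsner–Popa orthonormal basis: if `B` is a finite-dimensional unital C*-algebra,
`A ⊆ B` a unital C*-subalgebra and `E : B → A` a faithful conditional expectation, then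
there is a finite family `u₁, …, uₙ ∈ B` such that `x = ∑ i, uᵢ · E(uᵢ* x)` for all
`x ∈ B`. -/
theorem exists_pimsner_popa_basis
    {B : Type*} [NormedRing B] [StarRing B] [CStarRing B] [NormedAlgebra ℂ B]
    [StarModule ℂ B] [PartialOrder B] [StarOrderedRing B] [FiniteDimensional ℂ B]
    (A : StarSubalgebra ℂ B) (E : B →ₗ[ℂ] B)
    (hmem : ∀ x : B, E x ∈ A)
    (hfix : ∀ a ∈ A, E a = a)
    (hbimod : ∀ a ∈ A, ∀ b ∈ A, ∀ x : B, E (a * x * b) = a * E x * b)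
    (hpos : ∀ x : B, 0 ≤ E (star x * x))
    (hfaithful : ∀ x : B, E (star x * x) = 0 → x = 0) :
    ∃ (n : ℕ) (u : Fin n → B), ∀ x : B, x = ∑ i, u i * E (star (u i) * x) := by
  classical
  letI : CStarAlgebra B := { toCompleteSpace := FiniteDimensional.complete ℂ B }
  -- one-sided module properties of E
  have hEr : ∀ (x a : B), a ∈ A → E (x * a) = E x * a := by
    intro x a ha
    have := hbimod 1 (one_mem A) a ha x
    simpa using this
  have hEl : ∀ (a : B), a ∈ A → ∀ x, E (a * x) = a * E x := by
    intro a ha x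
    have := hbimod a ha 1 (one_mem A) x
    simpa using this
  have hstar : ∀ z : B, E (star z) = star (E z) := aux_E_star E hpos
  -- the trace functional
  set ψ : B → ℂ := fun z => LinearMap.trace ℂ B (Algebra.lmul ℂ B z) with hψ
  have hψsmul : ∀ (c : ℂ) (z : B), ψ (c • z) = c * ψ z := by
    intro c z
    have h1 : Algebra.lmul ℂ B (c • z) = c • Algebra.lmul ℂ B z := by
      ext w
      simp [Algebra.coe_lmul_eq_mul, LinearMap.mul_apply', smul_mul_assoc]
    rw [hψ]
    simp only [h1, map_smul, smul_eq_mul]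
  -- basic setup
  set n := Module.finrank ℂ B with hn
  set bB : Module.Basis (Fin n) ℂ B := Module.finBasis ℂ B with hbB
  set T : B →ₗ[ℂ] B :=
    ∑ i, (LinearMap.mulLeft ℂ (bB i)) ∘ₗ (E ∘ₗ (LinearMap.mulLeft ℂ (star (bB i)))) with hT
  have hTapp : ∀ x : B, T x = ∑ i, bB i * E (star (bB i) * x) := by
    intro x
    rw [hT]
    simp [LinearMap.sum_apply, LinearMap.comp_apply, LinearMap.mulLeft_apply]
  -- symmetry of T with respect to the E-valued form
  have hsx : ∀ (x : B) (i : Fin n), E (star x * bB i) = star (E (star (bB i) * x)) := by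
    intro x i
    rw [← hstar, star_mul, star_star]
  have hTsym : ∀ x y : B, E (star (T x) * y) = E (star x * T y) := by
    intro x y
    rw [hTapp, hTapp]
    rw [star_sum, Finset.sum_mul, map_sum, Finset.mul_sum, map_sum]
    refine Finset.sum_congr rfl fun i _ => ?_
    rw [star_mul, mul_assoc]
    rw [hEl _ (star_mem (hmem _)) _]
    rw [← mul_assoc (star x) (bB i) _, hEr _ _ (hmem _)]
    rw [hsx]
  -- right A-linearity of T
  have hTA : ∀ (x a : B), a ∈ A → T (x * a) = T x * a := by
    intro x a ha
    rw [hTapp, hTapp, Finset.sum_mul]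
    refine Finset.sum_congr rfl fun i _ => ?_
    rw [← mul_assoc, hEr _ _ ha, mul_assoc]
  -- positivity of the form x ↦ E (x* T x)
  have hTform : ∀ v : B, E (star v * T v)
      = ∑ i, star (E (star (bB i) * v)) * E (star (bB i) * v) := by
    intro v
    rw [hTapp, Finset.mul_sum, map_sum]
    refine Finset.sum_congr rfl fun i _ => ?_
    rw [← mul_assoc, hEr _ _ (hmem _), hsx]
  have hTformpos : ∀ v : B, 0 ≤ E (star v * T v) := by
    intro v
    rw [hTform]
    exact Finset.sum_nonneg fun i _ => star_mul_self_nonneg _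
  have hTdef : ∀ v : B, E (star v * T v) = 0 → v = 0 := by
    intro v hv
    rw [hTform] at hv
    have hz : ∀ i ∈ Finset.univ, star (E (star (bB i) * v)) * E (star (bB i) * v) = 0 :=
      (Finset.sum_eq_zero_iff_of_nonneg fun i _ => star_mul_self_nonneg _).mp hv
    have hai : ∀ i : Fin n, E (star (bB i) * v) = 0 := by
      intro i
      exact CStarRing.star_mul_self_eq_zero_iff _ |>.mp (hz i (Finset.mem_univ i))
    apply hfaithful
    have hvrepr : v = ∑ i, bB.repr v i • bB i := (bB.sum_repr v).symm
    have hsv : star v = ∑ i, starRingEnd ℂ (bB.repr v i) • star (bB i) := by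
      conv_lhs => rw [hvrepr]
      rw [star_sum]
      exact Finset.sum_congr rfl fun i _ => by rw [star_smul, Complex.star_def]
    have : star v * v = ∑ i, starRingEnd ℂ (bB.repr v i) • (star (bB i) * v) := by
      rw [hsv, Finset.sum_mul]
      exact Finset.sum_congr rfl fun i _ => by rw [smul_mul_assoc]
    rw [this, map_sum]
    simp only [map_smul, hai, smul_zero, Finset.sum_const_zero]
  -- eigenvalues of T are positive reals
  have hEig : ∀ μ : ℂ, Module.End.HasEigenvalue T μ → 0 < μ.re ∧ μ = (μ.re : ℂ) := by
    intro μ hμ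
    obtain ⟨v, hv⟩ := hμ.exists_hasEigenvector
    have hTv : T v = μ • v := Module.End.mem_eigenspace_iff.mp hv.1
    have hv0 : v ≠ 0 := hv.2
    -- μ ≠ 0
    have hμ0 : μ ≠ 0 := by
      intro h
      apply hv0
      apply hTdef
      rw [hTv, h, zero_smul, mul_zero, map_zero]
    -- the two trace values
    have h1 := aux_trace_pos (hpos v)
    have h2 := aux_trace_pos (hTformpos v)
    have hne : ψ (E (star v * v)) ≠ 0 := by
      intro h
      exact hv0 (hfaithful v (h1.2 h))
    have hrel : ψ (E (star v * T v)) = μ * ψ (E (star v * v)) := by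
      rw [hTv, mul_smul_comm, map_smul, hψsmul]
    -- turn the complex inequalities into real data
    have hz1 : (ψ (E (star v * v))).im = 0 ∧ 0 ≤ (ψ (E (star v * v))).re := by
      have := h1.1
      rw [Complex.le_def] at this
      exact ⟨this.2.symm, by simpa [hψ] using this.1⟩
    have hz2 : (ψ (E (star v * T v))).im = 0 ∧ 0 ≤ (ψ (E (star v * T v))).re := by
      have := h2.1
      rw [Complex.le_def] at this
      exact ⟨this.2.symm, by simpa [hψ] using this.1⟩
    set r1 := (ψ (E (star v * v))).re with hr1
    set r2 := (ψ (E (star v * T v))).re with hr2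
    have hc1 : ψ (E (star v * v)) = (r1 : ℂ) := Complex.ext rfl (by simp [hz1.1])
    have hc2 : ψ (E (star v * T v)) = (r2 : ℂ) := Complex.ext rfl (by simp [hz2.1])
    have hr1pos : 0 < r1 := by
      rcases lt_or_eq_of_le hz1.2 with h | h
      · exact h
      · exfalso; apply hne; rw [hc1, ← h]; simp
    have hr1ne : (r1 : ℂ) ≠ 0 := by
      simpa using hr1pos.ne'
    have hμeq : μ = ((r2 / r1 : ℝ) : ℂ) := by
      have : μ * (r1 : ℂ) = (r2 : ℂ) := by rw [← hc1, ← hc2, hrel]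
      field_simp
      rw [mul_comm] at this
      push_cast
      rw [eq_div_iff hr1ne, mul_comm]
      exact this
    have hre : μ.re = r2 / r1 := by rw [hμeq]; simp
    have hrepos : 0 < μ.re := by
      rw [hre]
      rcases lt_or_eq_of_le hz2.2 with h | h
      · exact div_pos h hr1pos
      · exfalso
        apply hμ0
        rw [hμeq, ← h]
        simp
    exact ⟨hrepos, by rw [hμeq]; simp [hre]⟩
  -- the finite set of eigenvalues
  set sC : Finset ℂ := (minpoly ℂ T).roots.toFinset with hsC
  have hsCeig : ∀ μ ∈ sC, Module.End.HasEigenvalue T μ := by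
    intro μ hμ
    exact Module.End.hasEigenvalue_of_isRoot
      ((Polynomial.mem_roots'.mp (Multiset.mem_toFinset.mp hμ)).2)
  have hmemsC : ∀ μ : ℂ, Module.End.HasEigenvalue T μ → μ ∈ sC := by
    intro μ hμ
    rw [hsC, Multiset.mem_toFinset, Polynomial.mem_roots']
    exact ⟨minpoly.ne_zero_of_finite ℂ T, Module.End.isRoot_of_hasEigenvalue hμ⟩
  have hinj : Set.InjOn Complex.re ↑sC := by
    intro μ1 h1 μ2 h2 h
    rw [(hEig μ1 (hsCeig _ h1)).2, (hEig μ2 (hsCeig _ h2)).2, h]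
  obtain ⟨q, hqt⟩ : ∃ q : Polynomial ℝ, ∀ μ ∈ sC,
      Polynomial.eval μ.re q = (Real.sqrt μ.re)⁻¹ :=
    ⟨Lagrange.interpolate sC Complex.re fun μ => (Real.sqrt μ.re)⁻¹,
      fun μ hμ => Lagrange.eval_interpolate_at_node _ hinj hμ⟩
  set Q : Polynomial ℂ := q.map (algebraMap ℝ ℂ) with hQ
  set g : B →ₗ[ℂ] B := Polynomial.aeval T Q with hg
  -- the polynomial X * Q ^ 2 - 1 vanishes on all eigenvalues
  have heval : ∀ μ ∈ sC, Polynomial.eval μ (Polynomial.X * Q ^ 2 - 1) = 0 := by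
    intro μ hμ
    obtain ⟨hpos', hreal⟩ := hEig μ (hsCeig _ hμ)
    have hQt : Polynomial.eval μ Q = (((Real.sqrt μ.re)⁻¹ : ℝ) : ℂ) := by
      conv_lhs => rw [hreal]
      rw [hQ, Polynomial.eval_map,
        show ((μ.re : ℝ) : ℂ) = algebraMap ℝ ℂ μ.re from rfl,
        Polynomial.eval₂_at_apply, hqt μ hμ]
      rfl
    have h2 : ((((Real.sqrt μ.re)⁻¹ : ℝ) : ℂ)) ^ 2 * ((μ.re : ℝ) : ℂ) = 1 := by
      have h3 : ((Real.sqrt μ.re)⁻¹) ^ 2 * μ.re = 1 := by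
        rw [inv_pow, Real.sq_sqrt hpos'.le, inv_mul_cancel₀ hpos'.ne']
      calc ((((Real.sqrt μ.re)⁻¹ : ℝ) : ℂ)) ^ 2 * ((μ.re : ℝ) : ℂ)
          = ((((Real.sqrt μ.re)⁻¹) ^ 2 * μ.re : ℝ) : ℂ) := by push_cast; ring
        _ = 1 := by rw [h3]; simp
    simp only [Polynomial.eval_sub, Polynomial.eval_mul, Polynomial.eval_pow,
      Polynomial.eval_X, Polynomial.eval_one, hQt]
    nth_rewrite 1 [hreal]
    linear_combination h2
  -- collapse of generalized eigenspaces
  have hcol : ∀ μ : ℂ, Module.End.HasEigenvalue T μ →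
      ∀ w : B, (T - μ • 1) ((T - μ • 1) w) = 0 → (T - μ • 1) w = 0 := by
    intro μ hμ w hw
    obtain ⟨hpos', hreal⟩ := hEig μ hμ
    have happ : ∀ z : B, (T - μ • 1) z = T z - μ • z := by
      intro z
      simp [LinearMap.sub_apply, LinearMap.smul_apply]
    have hSsym : ∀ x y : B, E (star ((T - μ • 1) x) * y) = E (star x * ((T - μ • 1) y)) := by
      intro x y
      rw [happ, happ, star_sub, sub_mul, map_sub, mul_sub, map_sub, hTsym]
      congr 1
      rw [star_smul, smul_mul_assoc, mul_smul_comm, map_smul, map_smul, Complex.star_def,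
        hreal, Complex.conj_ofReal]
    have h0 : E (star ((T - μ • 1) w) * ((T - μ • 1) w)) = 0 := by
      calc E (star ((T - μ • 1) w) * ((T - μ • 1) w))
          = E (star w * ((T - μ • 1) ((T - μ • 1) w))) := hSsym _ _
        _ = 0 := by rw [hw, mul_zero, map_zero]
    exact hfaithful _ h0
  have hcoln : ∀ μ : ℂ, Module.End.HasEigenvalue T μ → ∀ (k : ℕ) (w : B),
      ((T - μ • 1) ^ (k + 1)) w = 0 → (T - μ • 1) w = 0 := by
    intro μ hμ k
    induction k with
    | zero => intro w hw; simpa using hw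
    | succ k ih =>
      intro w hw
      apply hcol μ hμ
      apply ih
      rw [← Module.End.mul_apply, ← pow_succ]
      exact hw
  -- any nonzero generalized eigenvector yields an eigenvalue
  have hev : ∀ (μ : ℂ) (k : ℕ) (w : B), ((T - μ • 1) ^ k) w = 0 → w ≠ 0 →
      Module.End.HasEigenvalue T μ := by
    intro μ k
    induction k with
    | zero => intro w hw hw0; exact absurd (by simpa using hw) hw0
    | succ k ih =>
      intro w hw hw0
      by_cases h : ((T - μ • 1) ^ k) w = 0
      · exact ih w h hw0
      · refine Module.End.hasEigenvalue_of_hasEigenvector (x := ((T - μ • 1) ^ k) w) ⟨?_, h⟩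
        rw [Module.End.mem_eigenspace_iff]
        have h1 : (T - μ • 1) (((T - μ • 1) ^ k) w) = 0 := by
          rw [← Module.End.mul_apply, ← pow_succ']
          exact hw
        have h2 : T (((T - μ • 1) ^ k) w) - μ • (((T - μ • 1) ^ k) w) = 0 := by
          simpa [LinearMap.sub_apply] using h1
        exact sub_eq_zero.mp h2
  -- action of polynomials on eigenvectors
  have haev : ∀ (p : Polynomial ℂ) (μ : ℂ) (w : B), T w = μ • w →
      (Polynomial.aeval T p) w = Polynomial.eval μ p • w := by
    intro p μ w hw
    induction p using Polynomial.induction_on' with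
    | add p1 p2 hp1 hp2 =>
      rw [map_add, LinearMap.add_apply, hp1, hp2, Polynomial.eval_add, add_smul]
    | monomial m c =>
      have hTp : ∀ m : ℕ, (T ^ m) w = μ ^ m • w := by
        intro m
        induction m with
        | zero => simp
        | succ m ihm =>
          rw [pow_succ', Module.End.mul_apply, ihm, map_smul, hw, smul_smul, ← pow_succ]
      rw [Polynomial.aeval_monomial, Polynomial.eval_monomial, Module.End.mul_apply,
        Module.algebraMap_end_apply, hTp, smul_smul, mul_comm]
  -- the key identity : aeval T (X * Q ^ 2 - 1) = 0
  have haeval0 : Polynomial.aeval T (Polynomial.X * Q ^ 2 - 1) = 0 := by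
    apply LinearMap.ext
    intro v
    rw [LinearMap.zero_apply]
    have hv : v ∈ ⨆ μ, Module.End.maxGenEigenspace T μ := by
      rw [Module.End.iSup_maxGenEigenspace_eq_top]; trivial
    refine Submodule.iSup_induction
      (motive := fun z => ((Polynomial.aeval T) (Polynomial.X * Q ^ 2 - 1)) z = 0) _ hv
      (fun μ x hx => ?_) (map_zero _) (fun x y hx hy => by
        have hx' : ((Polynomial.aeval T) (Polynomial.X * Q ^ 2 - 1)) x = 0 := hx
        have hy' : ((Polynomial.aeval T) (Polynomial.X * Q ^ 2 - 1)) y = 0 := hy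
        show ((Polynomial.aeval T) (Polynomial.X * Q ^ 2 - 1)) (x + y) = 0
        rw [map_add, hx', hy', add_zero])
    show ((Polynomial.aeval T) (Polynomial.X * Q ^ 2 - 1)) x = 0
    by_cases hx0 : x = 0
    · rw [hx0, map_zero]
    · rw [Module.End.mem_maxGenEigenspace] at hx
      obtain ⟨k, hk⟩ := hx
      have hμeig : Module.End.HasEigenvalue T μ := hev μ k x hk hx0
      have hTx : T x = μ • x := by
        rcases k with _ | k
        · exact absurd (by simpa using hk) hx0
        · have h1 := hcoln μ hμeig k x hk
          have h2 : T x - μ • x = 0 := by simpa [LinearMap.sub_apply] using h1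
          exact sub_eq_zero.mp h2
      rw [haev _ μ x hTx, heval μ (hmemsC μ hμeig), zero_smul]
  have hQXQ : Polynomial.aeval T (Q * (Polynomial.X * Q)) = 1 := by
    have h1 : Polynomial.aeval T (Polynomial.X * Q ^ 2) = 1 := by
      have h2 := haeval0
      rw [map_sub, map_one, sub_eq_zero] at h2
      exact h2
    rw [show Q * (Polynomial.X * Q) = Polynomial.X * Q ^ 2 by ring]
    exact h1
  -- symmetry and right A-linearity of powers of T and of g
  have hTksym : ∀ (k : ℕ) (x y : B), E (star ((T ^ k) x) * y) = E (star x * (T ^ k) y) := by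
    intro k
    induction k with
    | zero => intro x y; simp
    | succ k ih =>
      intro x y
      have hcomm : ∀ z : B, (T ^ k) (T z) = T ((T ^ k) z) := by
        intro z
        rw [← Module.End.mul_apply, ← Module.End.mul_apply, pow_mul_comm']
      rw [pow_succ, Module.End.mul_apply, ih, hTsym, ← hcomm, ← Module.End.mul_apply]
  have hTkA : ∀ (k : ℕ) (x a : B), a ∈ A → (T ^ k) (x * a) = (T ^ k) x * a := by
    intro k
    induction k with
    | zero => intro x a ha; simp
    | succ k ih =>
      intro x a ha
      rw [pow_succ, Module.End.mul_apply, Module.End.mul_apply, hTA _ _ ha, ih _ _ ha]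
  have hgsum : ∀ x : B, g x = ∑ k ∈ Finset.range (Q.natDegree + 1), Q.coeff k • (T ^ k) x := by
    intro x
    rw [hg, Polynomial.aeval_eq_sum_range]
    simp [LinearMap.sum_apply, LinearMap.smul_apply]
  have hcoeff : ∀ k : ℕ, starRingEnd ℂ (Q.coeff k) = Q.coeff k := by
    intro k
    rw [hQ, Polynomial.coeff_map, show algebraMap ℝ ℂ (q.coeff k) = ((q.coeff k : ℝ) : ℂ) from rfl,
      Complex.conj_ofReal]
  have hgsym : ∀ x y : B, E (star (g x) * y) = E (star x * g y) := by
    intro x y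
    rw [hgsum, hgsum]
    rw [star_sum, Finset.sum_mul, map_sum, Finset.mul_sum, map_sum]
    refine Finset.sum_congr rfl fun k _ => ?_
    rw [star_smul, smul_mul_assoc, map_smul, mul_smul_comm, map_smul, hTksym, Complex.star_def,
      hcoeff]
  have hgA : ∀ (x a : B), a ∈ A → g (x * a) = g x * a := by
    intro x a ha
    rw [hgsum, hgsum, Finset.sum_mul]
    exact Finset.sum_congr rfl fun k _ => by rw [hTkA k x a ha, smul_mul_assoc]
  -- conclusion
  refine ⟨n, fun i => g (bB i), fun x => ?_⟩
  have hx : g (T (g x)) = x := by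
    have h1 : (Polynomial.aeval T (Q * (Polynomial.X * Q))) x = x := by
      rw [hQXQ, Module.End.one_apply]
    rw [map_mul, map_mul, Polynomial.aeval_X, ← hg] at h1
    simpa [Module.End.mul_apply] using h1
  conv_lhs => rw [← hx, hTapp (g x), map_sum]
  refine Finset.sum_congr rfl fun i _ => ?_
  rw [hgA _ _ (hmem _), ← hgsym]
end

section
/- In a traceless Markov tower (M_n, E_n, e_n) of modulus d > 0, fix n ≥ 2 and suppose y ∈ M_{n+1} satisfies y z = 0 and z y = 0 for every z ∈ M_n e_n M_n (i.e. y annihilates the 'old stuff' ideal of M_{n+1} on both sides). Then y x = 0 and x y = 0 for every x ∈ M_{n-1} e_{n-1} M_{n-1}, and moreover x · E_{n+1}(y) = 0 and E_{n+1}(y) · x = 0 for every x ∈ M_{n-1} e_{n-1} M_{n-1} (so the new stuff comes from the old new stuff). -/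
/-- In a traceless Markov tower, if `y ∈ M_{n+1}` (with `n ≥ 2`) annihilates the old stuff
`Mₙ eₙ Mₙ` on both sides, then `y` and `E_{n+1}(y)` annihilate `M_{n-1} e_{n-1} M_{n-1}`
on both sides: the new stuff comes from the old new stuff. -/
theorem MarkovTower.new_stuff_from_old_new_stuff
    {B : Type*} [Ring B] [StarRing B] [Algebra ℂ B] [StarModule ℂ B]
    [PartialOrder B] [StarOrderedRing B]
    (T : MarkovTower B) (n : ℕ) (hn : 2 ≤ n) (y : B) (hy : y ∈ T.M (n + 1))
    (hyl : ∀ a ∈ T.M n, ∀ b ∈ T.M n, y * (a * T.e n * b) = 0)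
    (hyr : ∀ a ∈ T.M n, ∀ b ∈ T.M n, (a * T.e n * b) * y = 0) :
    ∀ a ∈ T.M (n - 1), ∀ b ∈ T.M (n - 1),
      y * (a * T.e (n - 1) * b) = 0 ∧
      (a * T.e (n - 1) * b) * y = 0 ∧
      (a * T.e (n - 1) * b) * T.E (n + 1) y = 0 ∧
      T.E (n + 1) y * (a * T.e (n - 1) * b) = 0 := by

  intro a ha b hb
  have h1 : (1:ℕ) ≤ n - 1 := by omega
  have hsucc : n - 1 + 1 = n := by omega
  have he : T.e (n - 1) ∈ T.M n := hsucc ▸ T.e_mem (n - 1) h1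
  have ha' : a ∈ T.M n := hsucc ▸ T.M_le (n - 1) ha
  have hb' : b ∈ T.M n := hsucc ▸ T.M_le (n - 1) hb
  have hd : ((T.d : ℂ) ^ 2) ≠ 0 := by
    have h : (T.d : ℂ) ≠ 0 := by exact_mod_cast ne_of_gt T.d_pos
    exact pow_ne_zero 2 h
  have htlj := T.e_tlj_up (n - 1) h1
  rw [hsucc] at htlj
  have key : T.e (n - 1) = ((T.d : ℂ) ^ 2) • (T.e (n - 1) * T.e n * T.e (n - 1)) := by
    rw [htlj, smul_smul, mul_inv_cancel₀ hd, one_smul]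
  have expand : a * T.e (n - 1) * b
      = ((T.d : ℂ) ^ 2) • ((a * T.e (n - 1)) * T.e n * (T.e (n - 1) * b)) := by
    calc a * T.e (n - 1) * b
        = a * (((T.d : ℂ) ^ 2) • (T.e (n - 1) * T.e n * T.e (n - 1))) * b := by
          rw [← key]
      _ = ((T.d : ℂ) ^ 2) • ((a * T.e (n - 1)) * T.e n * (T.e (n - 1) * b)) := by
          simp only [mul_smul_comm, smul_mul_assoc, mul_assoc]
  have hae : a * T.e (n - 1) ∈ T.M n := mul_mem ha' he
  have heb : T.e (n - 1) * b ∈ T.M n := mul_mem he hb'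
  have p1 : y * (a * T.e (n - 1) * b) = 0 := by
    rw [expand, mul_smul_comm, hyl _ hae _ heb, smul_zero]
  have p2 : (a * T.e (n - 1) * b) * y = 0 := by
    rw [expand, smul_mul_assoc, hyr _ hae _ heb, smul_zero]
  refine ⟨p1, p2, ?_, ?_⟩
  · have hw : a * T.e (n - 1) * b ∈ T.M n := mul_mem (mul_mem ha' he) hb'
    have := T.E_bimod (n + 1) (by omega) _ hw 1 (one_mem _) y hy
    rw [mul_one, mul_one, p2, map_zero] at this
    exact this.symm
  · have hw : a * T.e (n - 1) * b ∈ T.M n := mul_mem (mul_mem ha' he) hb'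
    have := T.E_bimod (n + 1) (by omega) 1 (one_mem _) _ hw y hy
    rw [one_mul, one_mul, p1, map_zero] at this
    exact this.symm
end

section
/- In a traceless Markov tower (M_n, E_n, e_n) of modulus d > 0, fix n ≥ 2 and suppose that M_n equals the linear span of M_{n-1} e_{n-1} M_{n-1} (i.e. the new stuff Y_n is zero). Then M_{n+1} equals the linear span of M_n e_n M_n (i.e. Y_{n+1} = 0); consequently the new stuff vanishes at all higher levels. -/
theorem MarkovTower.step_aux
    {B : Type*} [Ring B] [StarRing B] [Algebra ℂ B] [StarModule ℂ B]
    [PartialOrder B] [StarOrderedRing B]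
    (T : MarkovTower B) (k : ℕ) (hk : 2 ≤ k)
    (h : (T.M k : Set B) =
      ((Submodule.span ℂ
        {z : B | ∃ a ∈ T.M (k - 1), ∃ b ∈ T.M (k - 1), z = a * T.e (k - 1) * b}
        : Submodule ℂ B) : Set B)) :
    (T.M (k + 1) : Set B) =
      ((Submodule.span ℂ {z : B | ∃ a ∈ T.M k, ∃ b ∈ T.M k, z = a * T.e k * b}
        : Submodule ℂ B) : Set B) := by
  have hk1 : 1 ≤ k := by omega
  have hkk : k - 1 + 1 = k := by omega
  have hek1 : T.e (k - 1) ∈ T.M k := by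
    have := T.e_mem (k - 1) (by omega); rwa [hkk] at this
  have hMk1 : T.M (k - 1) ≤ T.M k := by
    have := T.M_le (k - 1); rwa [hkk] at this
  have hd2 : ((T.d : ℂ) ^ 2) ≠ 0 := by
    have : (T.d : ℂ) ≠ 0 := by exact_mod_cast T.d_pos.ne'
    exact pow_ne_zero 2 this
  apply Set.Subset.antisymm
  · intro x hx
    have h1 : (1 : B) ∈ Submodule.span ℂ
        {z : B | ∃ a ∈ T.M (k - 1), ∃ b ∈ T.M (k - 1), z = a * T.e (k - 1) * b} := by
      have h1' : (1 : B) ∈ (T.M k : Set B) := (T.M k).one_mem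
      rwa [h] at h1'
    have key : ∀ z ∈ {z : B | ∃ a ∈ T.M (k - 1), ∃ b ∈ T.M (k - 1), z = a * T.e (k - 1) * b},
        x * z ∈ Submodule.span ℂ {z : B | ∃ a ∈ T.M k, ∃ b ∈ T.M k, z = a * T.e k * b} := by
      rintro z ⟨a, ha, b, hb, rfl⟩
      have hw : x * a * T.e (k - 1) ∈ T.M (k + 1) :=
        mul_mem (mul_mem hx (T.M_le k (hMk1 ha))) (T.M_le k hek1)
      obtain ⟨y, hy, hye⟩ := T.pull_down k hk1 _ hw
      have tlj := T.e_tlj_up (k - 1) (by omega)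
      rw [hkk] at tlj
      have e2 : a * T.e (k - 1) * b
          = ((T.d : ℂ) ^ 2) • (a * (T.e (k - 1) * T.e k * T.e (k - 1)) * b) := by
        rw [tlj]
        simp [mul_smul_comm, smul_mul_assoc, smul_smul, mul_inv_cancel₀ hd2]
      have e3 : x * (a * T.e (k - 1) * b)
          = ((T.d : ℂ) ^ 2) • ((x * a * T.e (k - 1) * T.e k) * (T.e (k - 1) * b)) := by
        rw [e2, mul_smul_comm]
        congr 1
        simp [mul_assoc]
      rw [e3, hye]
      exact Submodule.smul_mem _ _ (Submodule.subset_span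
        ⟨y, hy, T.e (k - 1) * b, mul_mem hek1 (hMk1 hb), rfl⟩)
    have hmaps : Submodule.map (LinearMap.mulLeft ℂ x)
        (Submodule.span ℂ
          {z : B | ∃ a ∈ T.M (k - 1), ∃ b ∈ T.M (k - 1), z = a * T.e (k - 1) * b})
        ≤ Submodule.span ℂ {z : B | ∃ a ∈ T.M k, ∃ b ∈ T.M k, z = a * T.e k * b} := by
      rw [Submodule.map_span]
      exact Submodule.span_le.mpr (by rintro _ ⟨z, hz, rfl⟩; exact key z hz)
    have hx1 : x * 1 ∈ Submodule.span ℂ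
        {z : B | ∃ a ∈ T.M k, ∃ b ∈ T.M k, z = a * T.e k * b} :=
      hmaps (Submodule.mem_map_of_mem h1)
    simpa using hx1
  · intro x hx
    induction hx using Submodule.span_induction with
    | mem z hz =>
      obtain ⟨a, ha, b, hb, rfl⟩ := hz
      exact mul_mem (mul_mem (T.M_le k ha) (T.e_mem k hk1)) (T.M_le k hb)
    | zero => exact zero_mem _
    | add u v _ _ hu hv => exact add_mem hu hv
    | smul c u _ hu => exact SMulMemClass.smul_mem c hu

/-- In a traceless Markov tower, if the new stuff vanishes at level `n ≥ 2` (i.e. `Mₙ` is the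
linear span of `M_{n-1} e_{n-1} M_{n-1}`), then it vanishes at level `n+1` and at all higher
levels: `M_{k+1}` is the linear span of `M_k e_k M_k` for all `k ≥ n`. -/
theorem MarkovTower.no_new_stuff_propagates
    {B : Type*} [Ring B] [StarRing B] [Algebra ℂ B] [StarModule ℂ B]
    [PartialOrder B] [StarOrderedRing B]
    (T : MarkovTower B) (n : ℕ) (hn : 2 ≤ n)
    (h : (T.M n : Set B) =
      ((Submodule.span ℂ
        {z : B | ∃ a ∈ T.M (n - 1), ∃ b ∈ T.M (n - 1), z = a * T.e (n - 1) * b}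
        : Submodule ℂ B) : Set B)) :
    ∀ k, n ≤ k →
      (T.M (k + 1) : Set B) =
        ((Submodule.span ℂ {z : B | ∃ a ∈ T.M k, ∃ b ∈ T.M k, z = a * T.e k * b}
          : Submodule ℂ B) : Set B) := by
  intro k hkn
  induction k, hkn using Nat.le_induction with
  | base => exact T.step_aux n hn h
  | succ k hk ih => exact T.step_aux (k + 1) (by omega) ih
end
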